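/- Let Φ be a quadratic form on ℝ^{n×m}. Then Φ is polyconvex, i.e., there exist n×m real matrices M₁, …, M_k and real coefficients c_{ikjl} (indexed by 1 ≤ i < k ≤ n, 1 ≤ j < l ≤ m) such that Φ(Z) = Σᵢ ⟨Z, Mᵢ⟩² + Σ_{i<k, j<l} c_{ikjl} (Z_{ij} Z_{kl} − Z_{il} Z_{kj}) for all Z, if and only if the biquadratic F(x,y) = Φ(x yᵀ) is a sum of squares, i.e., there exist n×m real matrices N₁, …, N_r such that Φ(x yᵀ) = Σⱼ ⟨x, Nⱼ y⟩² for all x ∈ ℝⁿ, y ∈ ℝᵐ. -/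

import Mathlib

open Matrix

/-- The standard inner product `⟨A, B⟩ = trace (A Bᵀ)` on matrices. -/
def matInner {n m : ℕ} (A B : Matrix (Fin n) (Fin m) ℝ) : ℝ := (A * Bᵀ).trace

/-- A quadratic form on `n × m` real matrices: `Φ Z = ⟨Z, C Z⟩` for a symmetric
linear map `C` on matrices. -/
def IsMatQuadraticForm (n m : ℕ) (Φ : Matrix (Fin n) (Fin m) ℝ → ℝ) : Prop :=
  ∃ C : Matrix (Fin n) (Fin m) ℝ →ₗ[ℝ] Matrix (Fin n) (Fin m) ℝ,
    (∀ A B, matInner A (C B) = matInner (C A) B) ∧ ∀ Z, Φ Z = matInner Z (C Z)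

lemma matInner_eq {n m : ℕ} (A B : Matrix (Fin n) (Fin m) ℝ) :
    matInner A B = ∑ i, ∑ j, A i j * B i j := by
  simp [matInner, Matrix.trace, Matrix.mul_apply, Matrix.diag]

lemma matInner_comm {n m : ℕ} (A B : Matrix (Fin n) (Fin m) ℝ) :
    matInner A B = matInner B A := by
  simp [matInner_eq, mul_comm]

lemma matInner_basis {n m : ℕ} (i : Fin n) (j : Fin m) (W : Matrix (Fin n) (Fin m) ℝ) :
    matInner (Matrix.single i j 1) W = W i j := by
  simp [matInner_eq, Matrix.single, ite_and, Finset.sum_ite_eq]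

lemma single_collapse {N : ℕ} (i : Fin N) (g : Fin N → ℝ) :
    (∑ i', (Pi.single i 1 : Fin N → ℝ) i' * g i') = g i := by
  simp [Pi.single_apply]

lemma two_collapse {N : ℕ} (i k : Fin N) (g : Fin N → ℝ) :
    (∑ i', ((Pi.single i 1 : Fin N → ℝ) + (Pi.single k 1 : Fin N → ℝ)) i' * g i') = g i + g k := by
  simp only [Pi.add_apply, add_mul, Finset.sum_add_distrib, single_collapse]

lemma sum_pairs {α : Type*} [Fintype α] [LinearOrder α] (h : α → α → ℝ)
    (hd : ∀ i, h i i = 0) :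
    ∑ i, ∑ k, h i k = ∑ i, ∑ k, if i < k then h i k + h k i else 0 := by
  have key : ∀ i k : α, h i k =
      (if i < k then h i k else 0) + (if i = k then h i k else 0) +
      (if k < i then h i k else 0) := by
    intro i k
    rcases lt_trichotomy i k with h1 | h1 | h1
    · simp [h1, h1.ne, not_lt.mpr h1.le]
    · simp [h1, hd, lt_irrefl]
    · simp [h1, h1.ne', not_lt.mpr h1.le]
  calc ∑ i, ∑ k, h i k
      = ∑ i, ∑ k, ((if i < k then h i k else 0) + (if i = k then h i k else 0) +
        (if k < i then h i k else 0)) := by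
        refine Finset.sum_congr rfl fun i _ => Finset.sum_congr rfl fun k _ => key i k
    _ = (∑ i, ∑ k, if i < k then h i k else 0) + (∑ i, ∑ k, if i = k then h i k else 0)
        + (∑ i, ∑ k, if k < i then h i k else 0) := by
        simp [Finset.sum_add_distrib]
    _ = ∑ i, ∑ k, if i < k then h i k + h k i else 0 := by
        have h2 : (∑ i, ∑ k, if i = k then h i k else 0) = 0 := by
          simp [Finset.sum_ite_eq, hd]
        have h3 : (∑ i : α, ∑ k : α, if k < i then h i k else 0)
            = ∑ i : α, ∑ k : α, if i < k then h k i else 0 := Finset.sum_comm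
        rw [h2, h3]
        simp only [add_zero, ← Finset.sum_add_distrib]
        refine Finset.sum_congr rfl fun i _ => Finset.sum_congr rfl fun k _ => ?_
        by_cases h4 : i < k <;> simp [h4]

section key
variable {n m : ℕ} (f : Fin n → Fin m → Fin n → Fin m → ℝ)

lemma stepA
    (H : ∀ (x : Fin n → ℝ) (y : Fin m → ℝ),
      (∑ i, x i * ∑ j, y j * ∑ k, x k * ∑ l, y l * f i j k l) = 0) :
    ∀ i j, f i j i j = 0 := by
  intro i j
  have := H (Pi.single i 1) (Pi.single j 1)
  simpa only [single_collapse] using this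

lemma stepBrow (hsym : ∀ i j k l, f i j k l = f k l i j)
    (H : ∀ (x : Fin n → ℝ) (y : Fin m → ℝ),
      (∑ i, x i * ∑ j, y j * ∑ k, x k * ∑ l, y l * f i j k l) = 0) :
    ∀ i j l, f i j i l = 0 := by
  intro i j l
  have h1 := H (Pi.single i 1) (Pi.single j 1 + Pi.single l 1)
  simp only [single_collapse, two_collapse] at h1
  have a1 := stepA f H i j
  have a2 := stepA f H i l
  have s := hsym i l i j
  linarith

lemma stepBcol (hsym : ∀ i j k l, f i j k l = f k l i j)
    (H : ∀ (x : Fin n → ℝ) (y : Fin m → ℝ),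
      (∑ i, x i * ∑ j, y j * ∑ k, x k * ∑ l, y l * f i j k l) = 0) :
    ∀ i j k, f i j k j = 0 := by
  intro i j k
  have h1 := H (Pi.single i 1 + Pi.single k 1) (Pi.single j 1)
  simp only [single_collapse, two_collapse] at h1
  have a1 := stepA f H i j
  have a2 := stepA f H k j
  have s := hsym k j i j
  linarith

lemma stepC (hsym : ∀ i j k l, f i j k l = f k l i j)
    (H : ∀ (x : Fin n → ℝ) (y : Fin m → ℝ),
      (∑ i, x i * ∑ j, y j * ∑ k, x k * ∑ l, y l * f i j k l) = 0) :
    ∀ i j k l, f i l k j = - f i j k l := by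
  intro i j k l
  have h1 := H (Pi.single i 1 + Pi.single k 1) (Pi.single j 1 + Pi.single l 1)
  simp only [single_collapse, two_collapse] at h1
  have b1 := stepBrow f hsym H i j j
  have b2 := stepBrow f hsym H i j l
  have b3 := stepBrow f hsym H i l j
  have b4 := stepBrow f hsym H i l l
  have b5 := stepBrow f hsym H k j j
  have b6 := stepBrow f hsym H k j l
  have b7 := stepBrow f hsym H k l j
  have b8 := stepBrow f hsym H k l l
  have c1 := stepBcol f hsym H i j k
  have c2 := stepBcol f hsym H i l k
  have c3 := stepBcol f hsym H k j i
  have c4 := stepBcol f hsym H k l i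
  have s1 := hsym k l i j
  have s2 := hsym k j i l
  linarith

lemma key_final
    (hsym : ∀ i j k l, f i j k l = f k l i j)
    (hArow : ∀ i j l, f i j i l = 0)
    (hAcol : ∀ i j k, f i j k j = 0)
    (hC : ∀ i j k l, f i l k j = - f i j k l)
    (Z : Matrix (Fin n) (Fin m) ℝ) :
    (∑ i, ∑ j, ∑ k, ∑ l, f i j k l * Z i j * Z k l)
      = ∑ i, ∑ k, ∑ j, ∑ l,
          if i < k ∧ j < l then (2 * f i j k l) * (Z i j * Z k l - Z i l * Z k j) else 0 := by
  have reorder : (∑ i, ∑ j, ∑ k, ∑ l, f i j k l * Z i j * Z k l)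
      = ∑ i, ∑ k, ∑ j, ∑ l, f i j k l * Z i j * Z k l := by
    refine Finset.sum_congr rfl fun i _ => ?_
    exact Finset.sum_comm
  rw [reorder]
  set h : Fin n → Fin n → ℝ := fun i k => ∑ j, ∑ l, f i j k l * Z i j * Z k l with hh
  have hd : ∀ i, h i i = 0 := by
    intro i; simp [hh, hArow]
  have hswap : ∀ i k, h k i = h i k := by
    intro i k
    calc h k i = ∑ j, ∑ l, f k j i l * Z k j * Z i l := rfl
      _ = ∑ l, ∑ j, f k j i l * Z k j * Z i l := Finset.sum_comm
      _ = ∑ j, ∑ l, f k l i j * Z k l * Z i j := rfl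
      _ = h i k := by
          refine Finset.sum_congr rfl fun j _ => Finset.sum_congr rfl fun l _ => ?_
          rw [← hsym i j k l]; ring
  rw [sum_pairs h hd]
  refine Finset.sum_congr rfl fun i _ => Finset.sum_congr rfl fun k _ => ?_
  by_cases hik : i < k
  · simp only [hik, if_true, true_and, hswap i k]
    have inner : h i k + h i k = ∑ j, ∑ l,
        if j < l then (2 * f i j k l) * (Z i j * Z k l - Z i l * Z k j) else 0 := by
      have heq : h i k + h i k = ∑ j, ∑ l, (2 * f i j k l * Z i j * Z k l) := by
        simp only [hh, ← Finset.sum_add_distrib]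
        refine Finset.sum_congr rfl fun j _ => Finset.sum_congr rfl fun l _ => ?_
        ring
      rw [heq, sum_pairs (fun j l => 2 * f i j k l * Z i j * Z k l) (by intro j; simp [hAcol])]
      refine Finset.sum_congr rfl fun j _ => Finset.sum_congr rfl fun l _ => ?_
      by_cases hjl : j < l
      · simp only [hjl, if_true]
        rw [hC i j k l]; ring
      · simp [hjl]
    rw [inner]
  · simp [hik]

end key

lemma apply_expand {n m : ℕ} (C : Matrix (Fin n) (Fin m) ℝ →ₗ[ℝ] Matrix (Fin n) (Fin m) ℝ)
    (Z : Matrix (Fin n) (Fin m) ℝ) (i : Fin n) (j : Fin m) :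
    (C Z) i j = ∑ k, ∑ l, Z k l * (C (Matrix.single k l 1)) i j := by
  have hZ : Z = ∑ k, ∑ l, Z k l • Matrix.single k l (1:ℝ) := by
    conv_lhs => rw [matrix_eq_sum_single Z]
    refine Finset.sum_congr rfl fun k _ => Finset.sum_congr rfl fun l _ => ?_
    rw [smul_single]; norm_num
  conv_lhs => rw [hZ]
  rw [map_sum]
  rw [Matrix.sum_apply]
  refine Finset.sum_congr rfl fun k _ => ?_
  rw [map_sum, Matrix.sum_apply]
  refine Finset.sum_congr rfl fun l _ => ?_
  rw [_root_.map_smul]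
  simp

lemma expand_quad {n m : ℕ} (C : Matrix (Fin n) (Fin m) ℝ →ₗ[ℝ] Matrix (Fin n) (Fin m) ℝ)
    (Z : Matrix (Fin n) (Fin m) ℝ) :
    matInner Z (C Z) = ∑ i, ∑ j, ∑ k, ∑ l,
      (C (Matrix.single k l 1)) i j * Z i j * Z k l := by
  rw [matInner_eq]
  refine Finset.sum_congr rfl fun i _ => Finset.sum_congr rfl fun j _ => ?_
  rw [apply_expand, Finset.mul_sum]
  refine Finset.sum_congr rfl fun k _ => ?_
  rw [Finset.mul_sum]
  refine Finset.sum_congr rfl fun l _ => ?_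
  ring

lemma expand_sq {n m : ℕ} (Z N : Matrix (Fin n) (Fin m) ℝ) :
    matInner Z N ^ 2 = ∑ i, ∑ j, ∑ k, ∑ l, (N i j * N k l) * Z i j * Z k l := by
  rw [sq, matInner_eq, Finset.sum_mul_sum]
  have key : ∀ i k : Fin n, (∑ j, Z i j * N i j) * (∑ l, Z k l * N k l)
      = ∑ j, ∑ l, (N i j * N k l) * Z i j * Z k l := by
    intro i k
    rw [Finset.sum_mul_sum]
    exact Finset.sum_congr rfl fun j _ => Finset.sum_congr rfl fun l _ => by ring
  calc (∑ i, ∑ k, (∑ j, Z i j * N i j) * ∑ l, Z k l * N k l)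
      = ∑ i, ∑ k, ∑ j, ∑ l, (N i j * N k l) * Z i j * Z k l :=
        Finset.sum_congr rfl fun i _ => Finset.sum_congr rfl fun k _ => key i k
    _ = ∑ i, ∑ j, ∑ k, ∑ l, (N i j * N k l) * Z i j * Z k l :=
        Finset.sum_congr rfl fun i _ => Finset.sum_comm

lemma dot_eq {n m : ℕ} (x : Fin n → ℝ) (y : Fin m → ℝ) (N : Matrix (Fin n) (Fin m) ℝ) :
    x ⬝ᵥ N.mulVec y = matInner (vecMulVec x y) N := by
  rw [matInner_eq]
  simp only [dotProduct, Matrix.mulVec, Matrix.vecMulVec_apply, dotProduct, Finset.mul_sum]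
  exact Finset.sum_congr rfl fun i _ => Finset.sum_congr rfl fun j _ => by ring

lemma sum_comm5 {α β γ δ ε : Type*} [Fintype α] [Fintype β] [Fintype γ] [Fintype δ] [Fintype ε]
    (g : α → β → γ → δ → ε → ℝ) :
    ∑ i, ∑ j, ∑ k, ∑ l, ∑ t, g i j k l t = ∑ t, ∑ i, ∑ j, ∑ k, ∑ l, g i j k l t := by
  trans ∑ i, ∑ j, ∑ k, ∑ t, ∑ l, g i j k l t
  · exact Finset.sum_congr rfl fun i _ => Finset.sum_congr rfl fun j _ =>
      Finset.sum_congr rfl fun k _ => Finset.sum_comm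
  trans ∑ i, ∑ j, ∑ t, ∑ k, ∑ l, g i j k l t
  · exact Finset.sum_congr rfl fun i _ => Finset.sum_congr rfl fun j _ => Finset.sum_comm
  trans ∑ i, ∑ t, ∑ j, ∑ k, ∑ l, g i j k l t
  · exact Finset.sum_congr rfl fun i _ => Finset.sum_comm
  exact Finset.sum_comm

lemma nested_eq {n m : ℕ} (f : Fin n → Fin m → Fin n → Fin m → ℝ)
    (x : Fin n → ℝ) (y : Fin m → ℝ) :
    (∑ i, x i * ∑ j, y j * ∑ k, x k * ∑ l, y l * f i j k l)
      = ∑ i, ∑ j, ∑ k, ∑ l, f i j k l * (x i * y j) * (x k * y l) := by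
  simp only [Finset.mul_sum]
  refine Finset.sum_congr rfl fun i _ => Finset.sum_congr rfl fun j _ =>
    Finset.sum_congr rfl fun k _ => Finset.sum_congr rfl fun l _ => by ring

/-- A quadratic form `Φ` on `n × m` real matrices is polyconvex (a sum of squares of
linear forms plus a linear combination of `2 × 2` minors) if and only if the
associated biquadratic `(x, y) ↦ Φ (x yᵀ)` is a sum of squares. -/
theorem polyconvex_iff_biquadratic_sos
    (n m : ℕ) (Φ : Matrix (Fin n) (Fin m) ℝ → ℝ)
    (hq : IsMatQuadraticForm n m Φ) :
    (∃ (p : ℕ) (M : Fin p → Matrix (Fin n) (Fin m) ℝ)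
       (c : Fin n → Fin n → Fin m → Fin m → ℝ),
      ∀ Z : Matrix (Fin n) (Fin m) ℝ,
        Φ Z = ∑ i, matInner Z (M i) ^ 2 +
          ∑ i, ∑ k, ∑ j, ∑ l,
            if i < k ∧ j < l then c i k j l * (Z i j * Z k l - Z i l * Z k j) else 0) ↔
    (∃ (r : ℕ) (N : Fin r → Matrix (Fin n) (Fin m) ℝ),
      ∀ (x : Fin n → ℝ) (y : Fin m → ℝ),
        Φ (vecMulVec x y) = ∑ j, (x ⬝ᵥ (N j).mulVec y) ^ 2) := by
  obtain ⟨C, hCsym, hCq⟩ := hq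
  constructor
  · rintro ⟨p, M, c, hdecomp⟩
    refine ⟨p, M, fun x y => ?_⟩
    rw [hdecomp (vecMulVec x y)]
    have hm : (∑ i, ∑ k, ∑ j, ∑ l,
        if i < k ∧ j < l then c i k j l *
          (vecMulVec x y i j * vecMulVec x y k l - vecMulVec x y i l * vecMulVec x y k j)
        else 0) = 0 := by
      refine Finset.sum_eq_zero fun i _ => Finset.sum_eq_zero fun k _ =>
        Finset.sum_eq_zero fun j _ => Finset.sum_eq_zero fun l _ => ?_
      by_cases h : i < k ∧ j < l
      · rw [if_pos h]; simp only [Matrix.vecMulVec_apply]; ring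
      · simp [h]
    rw [hm, add_zero]
    exact Finset.sum_congr rfl fun t _ => by rw [dot_eq]
  · rintro ⟨r, N, hsos⟩
    set f : Fin n → Fin m → Fin n → Fin m → ℝ := fun i j k l =>
      (C (Matrix.single k l 1)) i j - ∑ t, (N t) i j * (N t) k l with hf
    have hsym : ∀ i j k l, f i j k l = f k l i j := by
      intro i j k l
      have h1 : (C (Matrix.single k l 1)) i j = (C (Matrix.single i j 1)) k l := by
        calc (C (Matrix.single k l 1)) i j
            = matInner (Matrix.single i j 1) (C (Matrix.single k l 1)) :=
              (matInner_basis i j _).symm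
          _ = matInner (C (Matrix.single i j 1)) (Matrix.single k l 1) := hCsym _ _
          _ = matInner (Matrix.single k l 1) (C (Matrix.single i j 1)) := matInner_comm _ _
          _ = (C (Matrix.single i j 1)) k l := matInner_basis k l _
      simp only [hf, h1]
      congr 1
      exact Finset.sum_congr rfl fun t _ => by ring
    have hquad : ∀ Z : Matrix (Fin n) (Fin m) ℝ,
        (∑ i, ∑ j, ∑ k, ∑ l, f i j k l * Z i j * Z k l)
          = matInner Z (C Z) - ∑ t, matInner Z (N t) ^ 2 := by
      intro Z
      have h1 : (∑ i, ∑ j, ∑ k, ∑ l, f i j k l * Z i j * Z k l)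
          = (∑ i, ∑ j, ∑ k, ∑ l, (C (Matrix.single k l 1)) i j * Z i j * Z k l)
            - ∑ i, ∑ j, ∑ k, ∑ l, ∑ t, ((N t) i j * (N t) k l) * Z i j * Z k l := by
        rw [← Finset.sum_sub_distrib]
        refine Finset.sum_congr rfl fun i _ => ?_
        rw [← Finset.sum_sub_distrib]
        refine Finset.sum_congr rfl fun j _ => ?_
        rw [← Finset.sum_sub_distrib]
        refine Finset.sum_congr rfl fun k _ => ?_
        rw [← Finset.sum_sub_distrib]
        refine Finset.sum_congr rfl fun l _ => ?_
        simp only [hf]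
        rw [← Finset.sum_mul, ← Finset.sum_mul]
        ring
      rw [h1, sum_comm5, ← expand_quad]
      congr 1
      exact Finset.sum_congr rfl fun t _ => (expand_sq Z (N t)).symm
    have H : ∀ (x : Fin n → ℝ) (y : Fin m → ℝ),
        (∑ i, x i * ∑ j, y j * ∑ k, x k * ∑ l, y l * f i j k l) = 0 := by
      intro x y
      rw [nested_eq]
      have : (∑ i, ∑ j, ∑ k, ∑ l, f i j k l * (x i * y j) * (x k * y l))
          = ∑ i, ∑ j, ∑ k, ∑ l, f i j k l * (vecMulVec x y) i j * (vecMulVec x y) k l := by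
        refine Finset.sum_congr rfl fun i _ => Finset.sum_congr rfl fun j _ =>
          Finset.sum_congr rfl fun k _ => Finset.sum_congr rfl fun l _ => ?_
        rw [Matrix.vecMulVec_apply, Matrix.vecMulVec_apply]
      rw [this, hquad, ← hCq]
      have h2 : (∑ t, matInner (vecMulVec x y) (N t) ^ 2)
          = ∑ t, (x ⬝ᵥ (N t).mulVec y) ^ 2 :=
        Finset.sum_congr rfl fun t _ => by rw [dot_eq]
      rw [h2, hsos x y, sub_self]
    refine ⟨r, N, fun i k j l => 2 * f i j k l, fun Z => ?_⟩
    have hkey := key_final f hsym (stepBrow f hsym H) (stepBcol f hsym H) (stepC f hsym H) Z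
    rw [hCq Z]
    have h3 : matInner Z (C Z)
        = (∑ t, matInner Z (N t) ^ 2) + ∑ i, ∑ j, ∑ k, ∑ l, f i j k l * Z i j * Z k l := by
      rw [hquad Z]; ring
    rw [h3, hkey]
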